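/- Let D be a probability measure on α × Fin k, Q a probability measure on Θ, and g : Θ × α → Fin k a measurable classifier. Then AV(Q) ≤ 2·R_D(Q) − R_D(Q)², i.e., the algorithm decision boundary variability is at most twice the Gibbs risk minus the Gibbs risk squared. (Key inequality in the proof of Theorem 1.) -/

import Mathlib

open MeasureTheory

/-- Key inequality in the proof of Theorem 1: `AV(Q) ≤ 2·R_D(Q) − R_D(Q)²`. -/
theorem algorithm_db_variability_le_two_risk_sub_risk_sq
    {α Θ : Type*} [MeasurableSpace α] [MeasurableSpace Θ]
    {k : ℕ} (hk : 2 ≤ k)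
    (D : Measure (α × Fin k)) [IsProbabilityMeasure D]
    (Q : Measure Θ) [IsProbabilityMeasure Q]
    (g : Θ × α → Fin k) (hg : Measurable g) :
    (∫ p, ∫ θ, ∫ θ',
        (if g (θ, p.1) ≠ g (θ', p.1) then (1 : ℝ) else 0) ∂Q ∂Q ∂D) ≤
      2 * (∫ p, ∫ θ, (if g (θ, p.1) ≠ p.2 then (1 : ℝ) else 0) ∂Q ∂D) -
        (∫ p, ∫ θ, (if g (θ, p.1) ≠ p.2 then (1 : ℝ) else 0) ∂Q ∂D) ^ 2 := by
  classical
  -- the indicator of misclassification, as a function of (p, θ)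
  set F : (α × Fin k) → Θ → ℝ :=
    fun p θ => if g (θ, p.1) ≠ p.2 then (1 : ℝ) else 0 with hFdef
  -- the Gibbs risk at a point p
  set r : (α × Fin k) → ℝ := fun p => ∫ θ, F p θ ∂Q with hrdef
  -- measurability of F jointly
  have hFmeas : Measurable (fun q : (α × Fin k) × Θ => F q.1 q.2) := by
    have h1 : Measurable fun q : (α × Fin k) × Θ => g (q.2, q.1.1) :=
      hg.comp (measurable_snd.prodMk measurable_fst.fst)
    have h2 : Measurable fun q : (α × Fin k) × Θ => q.1.2 := measurable_fst.snd
    exact Measurable.ite (measurableSet_eq_fun h1 h2).compl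
      measurable_const measurable_const
  have hF1 : ∀ p, Measurable (F p) := fun p =>
    hFmeas.comp (measurable_const.prodMk measurable_id)
  have hF01 : ∀ p θ, 0 ≤ F p θ ∧ F p θ ≤ 1 := by
    intro p θ; constructor <;> · simp only [hFdef]; split <;> norm_num
  have hFint : ∀ p, Integrable (F p) Q := by
    intro p
    refine (integrable_const (1 : ℝ)).mono' (hF1 p).aestronglyMeasurable ?_
    filter_upwards with θ
    rw [Real.norm_eq_abs, abs_of_nonneg (hF01 p θ).1]
    exact (hF01 p θ).2
  have hr0 : ∀ p, 0 ≤ r p := fun p => integral_nonneg fun θ => (hF01 p θ).1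
  have hr1 : ∀ p, r p ≤ 1 := by
    intro p
    calc r p ≤ ∫ _, (1 : ℝ) ∂Q :=
          integral_mono (hFint p) (integrable_const 1) fun θ => (hF01 p θ).2
      _ = 1 := by simp
  -- measurability of r
  have hrmeas : StronglyMeasurable r :=
    hFmeas.stronglyMeasurable.integral_prod_right'
  -- the disagreement indicator
  set H : (α × Fin k) → Θ → Θ → ℝ :=
    fun p θ θ' => if g (θ, p.1) ≠ g (θ', p.1) then (1 : ℝ) else 0 with hHdef
  have hH01 : ∀ p θ θ', 0 ≤ H p θ θ' ∧ H p θ θ' ≤ 1 := by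
    intro p θ θ'; constructor <;> · simp only [hHdef]; split <;> norm_num
  -- joint measurability of H
  have hHmeas : Measurable (fun q : ((α × Fin k) × Θ) × Θ => H q.1.1 q.1.2 q.2) := by
    have h1 : Measurable fun q : ((α × Fin k) × Θ) × Θ => g (q.1.2, q.1.1.1) :=
      hg.comp (measurable_fst.snd.prodMk measurable_fst.fst.fst)
    have h2 : Measurable fun q : ((α × Fin k) × Θ) × Θ => g (q.2, q.1.1.1) :=
      hg.comp (measurable_snd.prodMk measurable_fst.fst.fst)
    exact Measurable.ite (measurableSet_eq_fun h1 h2).compl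
      measurable_const measurable_const
  have hHmeas2 : ∀ p θ, Measurable (H p θ) := fun p θ =>
    hHmeas.comp ((measurable_const.prodMk measurable_const).prodMk measurable_id)
  have hHint : ∀ p θ, Integrable (H p θ) Q := by
    intro p θ
    refine (integrable_const (1 : ℝ)).mono' (hHmeas2 p θ).aestronglyMeasurable ?_
    filter_upwards with θ'
    rw [Real.norm_eq_abs, abs_of_nonneg (hH01 p θ θ').1]
    exact (hH01 p θ θ').2
  -- inner integral of H, measurability in (p, θ)
  have hKmeas : StronglyMeasurable (fun q : (α × Fin k) × Θ => ∫ θ', H q.1 q.2 θ' ∂Q) :=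
    hHmeas.stronglyMeasurable.integral_prod_right'
  -- the key pointwise indicator inequality
  have hkey : ∀ p θ θ', H p θ θ' ≤ F p θ + F p θ' - F p θ * F p θ' := by
    intro p θ θ'
    by_cases h1 : g (θ, p.1) = p.2 <;> by_cases h2 : g (θ', p.1) = p.2
    · have h12 : g (θ, p.1) = g (θ', p.1) := h1.trans h2.symm
      simp [hHdef, hFdef, h1, h2, h12]
    · have := (hH01 p θ θ').2
      simp only [hFdef, h1, h2, ne_eq, not_true_eq_false, not_false_eq_true, if_true,
        if_false, ite_false, ite_true]
      linarith
    · have := (hH01 p θ θ').2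
      simp only [hFdef, h1, h2, ne_eq, not_true_eq_false, not_false_eq_true, if_true,
        if_false, ite_false, ite_true]
      linarith
    · have := (hH01 p θ θ').2
      simp only [hFdef, h1, h2, ne_eq, not_true_eq_false, not_false_eq_true, if_true,
        if_false, ite_false, ite_true]
      linarith
  -- step 1 : inner integral bound
  have step1 : ∀ p θ, (∫ θ', H p θ θ' ∂Q) ≤ F p θ + r p - F p θ * r p := by
    intro p θ
    have ha : Integrable (fun θ' => F p θ + F p θ') Q := (integrable_const _).add (hFint p)
    have hb : Integrable (fun θ' => F p θ * F p θ') Q := (hFint p).const_mul _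
    have hrhs : Integrable (fun θ' => F p θ + F p θ' - F p θ * F p θ') Q := ha.sub hb
    calc (∫ θ', H p θ θ' ∂Q) ≤ ∫ θ', (F p θ + F p θ' - F p θ * F p θ') ∂Q :=
          integral_mono (hHint p θ) hrhs (hkey p θ)
      _ = F p θ + r p - F p θ * r p := by
          rw [integral_sub ha hb, integral_add (integrable_const _) (hFint p),
            integral_const, integral_const_mul]
          simp [hrdef]
  -- integrability of θ ↦ ∫ θ', H p θ θ'
  have hKint : ∀ p, Integrable (fun θ => ∫ θ', H p θ θ' ∂Q) Q := by
    intro p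
    have hm : Measurable fun θ : Θ => ((p, θ) : (α × Fin k) × Θ) :=
      measurable_const.prodMk measurable_id
    refine (integrable_const (1 : ℝ)).mono'
      ((hKmeas.comp_measurable hm).aestronglyMeasurable) ?_
    filter_upwards with θ
    rw [Real.norm_eq_abs, abs_of_nonneg (integral_nonneg fun θ' => (hH01 p θ θ').1)]
    calc (∫ θ', H p θ θ' ∂Q) ≤ ∫ _, (1 : ℝ) ∂Q :=
          integral_mono (hHint p θ) (integrable_const 1) fun θ' => (hH01 p θ θ').2
      _ = 1 := by simp
  -- step 2 : double integral bound at each p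
  have step2 : ∀ p, (∫ θ, ∫ θ', H p θ θ' ∂Q ∂Q) ≤ 2 * r p - r p ^ 2 := by
    intro p
    have ha : Integrable (fun θ => F p θ + r p) Q := (hFint p).add (integrable_const _)
    have hb : Integrable (fun θ => F p θ * r p) Q := (hFint p).mul_const _
    have hrhs : Integrable (fun θ => F p θ + r p - F p θ * r p) Q := ha.sub hb
    calc (∫ θ, ∫ θ', H p θ θ' ∂Q ∂Q) ≤ ∫ θ, (F p θ + r p - F p θ * r p) ∂Q :=
          integral_mono (hKint p) hrhs (step1 p)
      _ = 2 * r p - r p ^ 2 := by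
          rw [integral_sub ha hb, integral_add (hFint p) (integrable_const _),
            integral_const, integral_mul_const]
          simp only [← hrdef, measure_univ, probReal_univ, ENNReal.toReal_one, smul_eq_mul, one_mul]
          ring
  -- measurability of the double integral in p
  have hGmeas : StronglyMeasurable (fun p => ∫ θ, ∫ θ', H p θ θ' ∂Q ∂Q) :=
    hKmeas.integral_prod_right'
  have hGint : Integrable (fun p => ∫ θ, ∫ θ', H p θ θ' ∂Q ∂Q) D := by
    refine (integrable_const (1 : ℝ)).mono' hGmeas.aestronglyMeasurable ?_
    filter_upwards with p
    have h0 : 0 ≤ ∫ θ, ∫ θ', H p θ θ' ∂Q ∂Q :=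
      integral_nonneg fun θ => integral_nonneg fun θ' => (hH01 p θ θ').1
    rw [Real.norm_eq_abs, abs_of_nonneg h0]
    calc (∫ θ, ∫ θ', H p θ θ' ∂Q ∂Q) ≤ ∫ _, (1 : ℝ) ∂Q := by
          refine integral_mono (hKint p) (integrable_const 1) fun θ => ?_
          calc (∫ θ', H p θ θ' ∂Q) ≤ ∫ _, (1 : ℝ) ∂Q :=
                integral_mono (hHint p θ) (integrable_const 1) fun θ' => (hH01 p θ θ').2
            _ = 1 := by simp
      _ = 1 := by simp
  -- integrability of r and r ^ 2 w.r.t. D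
  have hrint : Integrable r D := by
    refine (integrable_const (1 : ℝ)).mono' hrmeas.aestronglyMeasurable ?_
    filter_upwards with p
    rw [Real.norm_eq_abs, abs_of_nonneg (hr0 p)]; exact hr1 p
  have hr2int : Integrable (fun p => r p ^ 2) D := by
    refine (integrable_const (1 : ℝ)).mono' ((hrmeas.pow 2).aestronglyMeasurable) ?_
    filter_upwards with p
    rw [Real.norm_eq_abs, abs_of_nonneg (sq_nonneg _)]
    nlinarith [hr0 p, hr1 p]
  -- Jensen : (∫ r)^2 ≤ ∫ r^2
  have hjensen : (∫ p, r p ∂D) ^ 2 ≤ ∫ p, r p ^ 2 ∂D := by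
    set m : ℝ := ∫ p, r p ∂D with hm
    have h0 : 0 ≤ ∫ p, (r p - m) ^ 2 ∂D := integral_nonneg fun p => sq_nonneg _
    have hexp : (fun p => (r p - m) ^ 2) = fun p => (r p ^ 2 - 2 * m * r p) + m ^ 2 := by
      funext p; ring
    have ha : Integrable (fun p => r p ^ 2 - 2 * m * r p) D := hr2int.sub (hrint.const_mul _)
    have hb : Integrable (fun p => 2 * m * r p) D := hrint.const_mul _
    rw [hexp, integral_add ha (integrable_const _),
      integral_sub hr2int hb, integral_const_mul, integral_const] at h0
    simp only [measure_univ, probReal_univ, ENNReal.toReal_one, smul_eq_mul, one_mul, ← hm] at h0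
    nlinarith [h0]
  -- put everything together
  have hmain : (∫ p, ∫ θ, ∫ θ', H p θ θ' ∂Q ∂Q ∂D) ≤
      2 * (∫ p, r p ∂D) - (∫ p, r p ∂D) ^ 2 := by
    calc (∫ p, ∫ θ, ∫ θ', H p θ θ' ∂Q ∂Q ∂D) ≤ ∫ p, (2 * r p - r p ^ 2) ∂D :=
          integral_mono hGint ((hrint.const_mul 2).sub hr2int) step2
      _ = 2 * (∫ p, r p ∂D) - ∫ p, r p ^ 2 ∂D := by
          rw [integral_sub (hrint.const_mul 2) hr2int, integral_const_mul]
      _ ≤ 2 * (∫ p, r p ∂D) - (∫ p, r p ∂D) ^ 2 := by linarith [hjensen]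
  exact hmain
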